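/- arXiv:2311.10124 — 2 statements merged into one kernel-verified Lean document; each statement's English description precedes it below -/
import Mathlib

section
/- Let n, p, v be nonnegative integers and let ω be a real number with p ≤ ω ≤ p+1. Then N_{0,n+v}(ω;p) = (1/(n!·(n+v)_v)) · Σ_{d=0}^{n} (−1)^{v+d} · C(n,d) · Σ_{m=0}^{v} (−1)^{v−m} · C(v,m) · Σ_{j=0}^{p} Σ_{c=0}^{m} B_c^m(ω−j) · ( B_{j−c}^d(ω−j) − B_{j−c−1}^d(ω−j) ), where (n+v)_v = (n+v)!/n! denotes the falling factorial. -/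
open Finset Nat

/-- The uniform B-spline basis (Schoenberg's identity):
`N_{0,n}(ω;p) = (1/n!) Σ_{j=0}^p (−1)^j C(n+1,j) (ω−j)^n`. -/
noncomputable def Nspline (n p : ℕ) (ω : ℝ) : ℝ :=
  (1 / (n ! : ℝ)) *
    ∑ j ∈ Finset.range (p + 1), (-1 : ℝ) ^ j * ((n + 1).choose j : ℝ) * (ω - j) ^ n

/-- The Bernstein basis functions `B_d^k(ω) = C(k,d) ω^d (1−ω)^{k−d}` for `0 ≤ d ≤ k`,
and `0` otherwise (in particular for `d < 0`). -/
noncomputable def bern (k : ℕ) (d : ℤ) (ω : ℝ) : ℝ :=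
  if 0 ≤ d ∧ d ≤ (k : ℤ) then (k.choose d.toNat : ℝ) * ω ^ d.toNat * (1 - ω) ^ (k - d.toNat)
  else 0

lemma bern_neg (k : ℕ) (d : ℤ) (ω : ℝ) (h : d < 0) : bern k d ω = 0 := by
  rw [bern, if_neg]; rintro ⟨h0, -⟩; omega

lemma bern_nat (k c : ℕ) (ω : ℝ) :
    bern k (c : ℤ) ω = (k.choose c : ℝ) * ω ^ c * (1 - ω) ^ (k - c) := by
  by_cases h : (c : ℤ) ≤ k
  · rw [bern, if_pos ⟨Int.natCast_nonneg c, h⟩, Int.toNat_natCast]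
  · rw [bern, if_neg (by tauto), Nat.choose_eq_zero_of_lt (by omega)]
    simp

lemma vander (a b k : ℕ) :
    (a + b).choose k = ∑ c ∈ range (k + 1), a.choose c * b.choose (k - c) := by
  rw [Nat.add_choose_eq, Finset.Nat.sum_antidiagonal_eq_sum_range_succ_mk]

lemma sumF (a b k : ℕ) :
    ∑ c ∈ range (a + 1), (if c ≤ k then (a.choose c * b.choose (k - c) : ℝ) else 0)
      = ((a + b).choose k : ℝ) := by
  have h1 : ∑ c ∈ range (a + 1), (if c ≤ k then (a.choose c * b.choose (k - c) : ℝ) else 0)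
      = ∑ c ∈ range (a + k + 2), (if c ≤ k then (a.choose c * b.choose (k - c) : ℝ) else 0) := by
    apply Finset.sum_subset (Finset.range_subset_range.2 (by omega))
    intro c hc hc'
    simp only [mem_range] at hc hc'
    have : a < c := by omega
    rw [Nat.choose_eq_zero_of_lt this]
    simp
  have h2 : ∑ c ∈ range (a + k + 2), (if c ≤ k then (a.choose c * b.choose (k - c) : ℝ) else 0)
      = ∑ c ∈ range (k + 1), ((a.choose c * b.choose (k - c) : ℕ) : ℝ) := by
    rw [← Finset.sum_subset (Finset.range_subset_range.mpr (show k + 1 ≤ a + k + 2 by omega))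
      (fun c hc hc' => by
        simp only [mem_range] at hc hc'
        exact if_neg (by omega))]
    apply Finset.sum_congr rfl
    intro c hc
    simp only [mem_range] at hc
    rw [if_pos (by omega)]
    push_cast; ring
  rw [h1, h2, vander]
  push_cast; ring

lemma conv (m d : ℕ) (z : ℤ) (t : ℝ) :
    ∑ c ∈ range (m + 1), bern m (c : ℤ) t * bern d (z - c) t = bern (m + d) z t := by
  rcases lt_or_ge z 0 with hz | hz
  · rw [bern_neg _ _ _ hz]
    apply Finset.sum_eq_zero
    intro c hc
    rw [bern_neg d _ _ (by omega)]
    ring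
  · obtain ⟨k, rfl⟩ : ∃ k : ℕ, z = (k : ℤ) := ⟨z.toNat, (Int.toNat_of_nonneg hz).symm⟩
    rw [bern_nat]
    have key : ∀ c ∈ range (m + 1), bern m (c : ℤ) t * bern d ((k : ℤ) - c) t
        = (if c ≤ k then (m.choose c * d.choose (k - c) : ℝ) else 0)
          * (t ^ k * (1 - t) ^ (m + d - k)) := by
      intro c hc
      simp only [mem_range] at hc
      by_cases hck : c ≤ k
      · have hcast : (k : ℤ) - c = ((k - c : ℕ) : ℤ) := by omega
        rw [hcast, bern_nat, bern_nat, if_pos hck]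
        by_cases hkd : k - c ≤ d
        · have e1 : t ^ c * t ^ (k - c) = t ^ k := by
            rw [← pow_add]; congr 1; omega
          have e2 : (1 - t) ^ (m - c) * (1 - t) ^ (d - (k - c)) = (1 - t) ^ (m + d - k) := by
            rw [← pow_add]; congr 1; omega
          calc (m.choose c : ℝ) * t ^ c * (1 - t) ^ (m - c)
                * ((d.choose (k - c) : ℝ) * t ^ (k - c) * (1 - t) ^ (d - (k - c)))
              = (m.choose c * d.choose (k - c) : ℝ)
                * ((t ^ c * t ^ (k - c)) * ((1 - t) ^ (m - c) * (1 - t) ^ (d - (k - c)))) := by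
                ring
            _ = _ := by rw [e1, e2]
        · rw [Nat.choose_eq_zero_of_lt (show d < k - c from by omega)]
          simp
      · rw [bern_neg d _ _ (by omega), if_neg hck]
        ring
    rw [Finset.sum_congr rfl key, ← Finset.sum_mul, sumF]
    ring

lemma single (N : ℕ) (z : ℤ) (t : ℝ) :
    ∑ s ∈ range (N + 1), (-1 : ℝ) ^ s * (N.choose s : ℝ) * bern s z t
      = if 0 ≤ z ∧ z ≤ (N : ℤ) then
          (-1 : ℝ) ^ z.toNat * (N.choose z.toNat : ℝ) * t ^ N else 0 := by
  rcases lt_or_ge z 0 with hz | hz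
  · rw [if_neg (by omega)]
    apply Finset.sum_eq_zero
    intro s hs
    rw [bern_neg _ _ _ hz]; ring
  obtain ⟨k, rfl⟩ : ∃ k : ℕ, z = (k : ℤ) := ⟨z.toNat, (Int.toNat_of_nonneg hz).symm⟩
  rw [Int.toNat_natCast]
  by_cases hkN : k ≤ N
  swap
  · rw [if_neg (by omega)]
    apply Finset.sum_eq_zero
    intro s hs
    simp only [mem_range] at hs
    rw [bern_nat, Nat.choose_eq_zero_of_lt (show s < k by omega)]
    simp
  rw [if_pos (by omega)]
  have step1 : ∑ s ∈ range (N + 1), (-1 : ℝ) ^ s * (N.choose s : ℝ) * bern s (k : ℤ) t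
      = ∑ s ∈ Finset.Ico k (N + 1), (-1 : ℝ) ^ s * (N.choose s : ℝ) * bern s (k : ℤ) t := by
    rw [Finset.range_eq_Ico]
    rw [← Finset.sum_Ico_consecutive _ (Nat.zero_le k) (by omega)]
    have : ∑ s ∈ Finset.Ico 0 k, (-1 : ℝ) ^ s * (N.choose s : ℝ) * bern s (k : ℤ) t = 0 := by
      apply Finset.sum_eq_zero
      intro s hs
      simp only [Finset.mem_Ico] at hs
      rw [bern_nat, Nat.choose_eq_zero_of_lt (show s < k by omega)]
      simp
    rw [this, zero_add]
  rw [step1, Finset.sum_Ico_eq_sum_range]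
  have hN1k : N + 1 - k = (N - k) + 1 := by omega
  rw [hN1k]
  have step2 : ∀ u ∈ range (N - k + 1),
      (-1 : ℝ) ^ (k + u) * (N.choose (k + u) : ℝ) * bern (k + u) (k : ℤ) t
        = ((-1 : ℝ) ^ k * (N.choose k : ℝ) * t ^ k)
          * (((N - k).choose u : ℝ) * (t - 1) ^ u * 1 ^ (N - k - u)) := by
    intro u hu
    simp only [mem_range] at hu
    rw [bern_nat]
    have hch : (N.choose (k + u) : ℝ) * ((k + u).choose k : ℝ)
        = (N.choose k : ℝ) * ((N - k).choose u : ℝ) := by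
      have := Nat.choose_mul (n := N) (k := k + u) (show k ≤ k + u by omega)
      rw [show k + u - k = u from by omega] at this
      exact_mod_cast congrArg (Nat.cast (R := ℝ)) this
    have hsub : k + u - k = u := by omega
    rw [hsub]
    have hsign : (t - 1) ^ u = (-1 : ℝ) ^ u * (1 - t) ^ u := by
      rw [← mul_pow]; congr 1; ring
    rw [pow_add, hsign, one_pow]
    calc (-1:ℝ) ^ k * (-1:ℝ) ^ u * ((N.choose (k + u) : ℝ))
          * ((((k + u).choose k : ℝ)) * t ^ k * (1 - t) ^ u)
        = ((N.choose (k + u) : ℝ) * ((k + u).choose k : ℝ))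
          * ((-1:ℝ) ^ k * (-1:ℝ) ^ u * t ^ k * (1 - t) ^ u) := by ring
      _ = _ := by rw [hch]; ring
  rw [Finset.sum_congr rfl step2, ← Finset.mul_sum]
  have hbin : ∑ u ∈ range (N - k + 1), ((N - k).choose u : ℝ) * (t - 1) ^ u * 1 ^ (N - k - u)
      = t ^ (N - k) := by
    have := add_pow (t - 1) 1 (N - k)
    rw [show t - 1 + 1 = t from by ring] at this
    rw [this]
    apply Finset.sum_congr rfl
    intro u hu; ring
  rw [hbin]
  have : t ^ k * t ^ (N - k) = t ^ N := by rw [← pow_add]; congr 1; omega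
  rw [mul_assoc, this]

lemma doubleS (n v : ℕ) (z : ℤ) (t : ℝ) :
    ∑ d ∈ range (n + 1), ∑ m ∈ range (v + 1),
        (-1 : ℝ) ^ (d + m) * (n.choose d : ℝ) * (v.choose m : ℝ) * bern (m + d) z t
      = if 0 ≤ z ∧ z ≤ ((n : ℤ) + v) then
          (-1 : ℝ) ^ z.toNat * ((n + v).choose z.toNat : ℝ) * t ^ (n + v) else 0 := by
  have hext : ∀ m ∈ range (v + 1), ∀ d : ℕ,
      bern (m + d) z t = ∑ c ∈ range (v + 1), bern m (c : ℤ) t * bern d (z - c) t := by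
    intro m hm d
    simp only [mem_range] at hm
    rw [← conv m d z t]
    apply Finset.sum_subset (Finset.range_subset_range.mpr (by omega))
    intro c hc hc'
    simp only [mem_range] at hc hc'
    rw [bern_nat, Nat.choose_eq_zero_of_lt (show m < c by omega)]
    simp
  have key : ∑ d ∈ range (n + 1), ∑ m ∈ range (v + 1),
        (-1 : ℝ) ^ (d + m) * (n.choose d : ℝ) * (v.choose m : ℝ) * bern (m + d) z t
      = ∑ c ∈ range (v + 1),
          (∑ m ∈ range (v + 1), (-1 : ℝ) ^ m * (v.choose m : ℝ) * bern m (c : ℤ) t)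
          * (∑ d ∈ range (n + 1), (-1 : ℝ) ^ d * (n.choose d : ℝ) * bern d (z - c) t) := by
    have e1 : ∀ d ∈ range (n + 1), ∀ m ∈ range (v + 1),
        (-1 : ℝ) ^ (d + m) * (n.choose d : ℝ) * (v.choose m : ℝ) * bern (m + d) z t
        = ∑ c ∈ range (v + 1),
            ((-1 : ℝ) ^ m * (v.choose m : ℝ) * bern m (c : ℤ) t)
            * ((-1 : ℝ) ^ d * (n.choose d : ℝ) * bern d (z - c) t) := by
      intro d _ m hm
      rw [hext m hm d, Finset.mul_sum]
      apply Finset.sum_congr rfl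
      intro c _
      rw [pow_add]
      ring
    calc ∑ d ∈ range (n + 1), ∑ m ∈ range (v + 1),
          (-1 : ℝ) ^ (d + m) * (n.choose d : ℝ) * (v.choose m : ℝ) * bern (m + d) z t
        = ∑ d ∈ range (n + 1), ∑ m ∈ range (v + 1), ∑ c ∈ range (v + 1),
            ((-1 : ℝ) ^ m * (v.choose m : ℝ) * bern m (c : ℤ) t)
            * ((-1 : ℝ) ^ d * (n.choose d : ℝ) * bern d (z - c) t) := by
          exact Finset.sum_congr rfl fun d hd => Finset.sum_congr rfl fun m hm => e1 d hd m hm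
      _ = ∑ d ∈ range (n + 1), ∑ c ∈ range (v + 1), ∑ m ∈ range (v + 1),
            ((-1 : ℝ) ^ m * (v.choose m : ℝ) * bern m (c : ℤ) t)
            * ((-1 : ℝ) ^ d * (n.choose d : ℝ) * bern d (z - c) t) := by
          exact Finset.sum_congr rfl fun d _ => Finset.sum_comm
      _ = ∑ c ∈ range (v + 1), ∑ d ∈ range (n + 1), ∑ m ∈ range (v + 1),
            ((-1 : ℝ) ^ m * (v.choose m : ℝ) * bern m (c : ℤ) t)
            * ((-1 : ℝ) ^ d * (n.choose d : ℝ) * bern d (z - c) t) := Finset.sum_comm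
      _ = _ := by
          apply Finset.sum_congr rfl
          intro c _
          rw [Finset.sum_mul_sum]
          exact Finset.sum_comm
  rw [key]
  have hsing : ∀ c ∈ range (v + 1),
      (∑ m ∈ range (v + 1), (-1 : ℝ) ^ m * (v.choose m : ℝ) * bern m (c : ℤ) t)
      = (-1 : ℝ) ^ c * (v.choose c : ℝ) * t ^ v := by
    intro c hc
    simp only [mem_range] at hc
    rw [single, if_pos (by omega), Int.toNat_natCast]
  rcases lt_or_ge z 0 with hz | hz
  · rw [if_neg (by omega)]
    apply Finset.sum_eq_zero
    intro c hc
    rw [single n (z - c) t, if_neg (by omega)]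
    exact mul_zero _
  obtain ⟨k, rfl⟩ : ∃ k : ℕ, z = (k : ℤ) := ⟨z.toNat, (Int.toNat_of_nonneg hz).symm⟩
  rw [Int.toNat_natCast]
  have term : ∀ c ∈ range (v + 1),
      (∑ m ∈ range (v + 1), (-1 : ℝ) ^ m * (v.choose m : ℝ) * bern m (c : ℤ) t)
      * (∑ d ∈ range (n + 1), (-1 : ℝ) ^ d * (n.choose d : ℝ) * bern d ((k : ℤ) - c) t)
      = (if c ≤ k then (v.choose c * n.choose (k - c) : ℝ) else 0)
        * ((-1 : ℝ) ^ k * t ^ (n + v)) := by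
    intro c hc
    rw [hsing c hc, single]
    simp only [mem_range] at hc
    by_cases hck : c ≤ k
    · have htn : ((k : ℤ) - c).toNat = k - c := by omega
      by_cases hkn : k - c ≤ n
      · rw [if_pos (by omega), if_pos hck, htn]
        have hs : (-1 : ℝ) ^ c * (-1 : ℝ) ^ (k - c) = (-1 : ℝ) ^ k := by
          rw [← pow_add]; congr 1; omega
        have ht : t ^ v * t ^ n = t ^ (n + v) := by
          rw [← pow_add]; congr 1; omega
        calc (-1:ℝ) ^ c * (v.choose c : ℝ) * t ^ v
              * ((-1:ℝ) ^ (k - c) * (n.choose (k - c) : ℝ) * t ^ n)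
            = (v.choose c * n.choose (k - c) : ℝ)
              * (((-1:ℝ) ^ c * (-1:ℝ) ^ (k - c)) * (t ^ v * t ^ n)) := by ring
          _ = _ := by rw [hs, ht]
      · rw [if_neg (by omega), if_pos hck,
          Nat.choose_eq_zero_of_lt (show n < k - c by omega)]
        simp
    · rw [if_neg (by omega), if_neg hck]
      ring
  rw [Finset.sum_congr rfl term, ← Finset.sum_mul, sumF]
  by_cases hk : k ≤ n + v
  · rw [if_pos (by omega), Nat.add_comm v n]
    ring
  · rw [if_neg (by omega), Nat.choose_eq_zero_of_lt (show v + n < k by omega)]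
    simp

lemma perj (n v j : ℕ) (t : ℝ) :
    ∑ d ∈ range (n + 1), ∑ m ∈ range (v + 1),
        (-1 : ℝ) ^ (v + d) * (n.choose d : ℝ) *
          ((-1 : ℝ) ^ (v - m) * (v.choose m : ℝ) *
            ∑ c ∈ range (m + 1),
              bern m (c : ℤ) t *
                (bern d ((j : ℤ) - c) t - bern d ((j : ℤ) - c - 1) t))
      = (-1 : ℝ) ^ j * ((n + v + 1).choose j : ℝ) * t ^ (n + v) := by
  have inner : ∀ d : ℕ, ∀ m ∈ range (v + 1),
      ∑ c ∈ range (m + 1), bern m (c : ℤ) t *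
          (bern d ((j : ℤ) - c) t - bern d ((j : ℤ) - c - 1) t)
      = bern (m + d) (j : ℤ) t - bern (m + d) ((j : ℤ) - 1) t := by
    intro d m _
    have e : ∀ c ∈ range (m + 1),
        bern m (c : ℤ) t * (bern d ((j : ℤ) - c) t - bern d ((j : ℤ) - c - 1) t)
        = bern m (c : ℤ) t * bern d ((j : ℤ) - c) t
          - bern m (c : ℤ) t * bern d (((j : ℤ) - 1) - c) t := by
      intro c _
      rw [show (j : ℤ) - c - 1 = ((j : ℤ) - 1) - c from by ring]
      ring
    rw [Finset.sum_congr rfl e, Finset.sum_sub_distrib, conv, conv]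
  have step : ∑ d ∈ range (n + 1), ∑ m ∈ range (v + 1),
      (-1 : ℝ) ^ (v + d) * (n.choose d : ℝ) *
        ((-1 : ℝ) ^ (v - m) * (v.choose m : ℝ) *
          ∑ c ∈ range (m + 1), bern m (c : ℤ) t *
            (bern d ((j : ℤ) - c) t - bern d ((j : ℤ) - c - 1) t))
      = (∑ d ∈ range (n + 1), ∑ m ∈ range (v + 1),
          (-1 : ℝ) ^ (d + m) * (n.choose d : ℝ) * (v.choose m : ℝ)
            * bern (m + d) (j : ℤ) t)
        - (∑ d ∈ range (n + 1), ∑ m ∈ range (v + 1),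
          (-1 : ℝ) ^ (d + m) * (n.choose d : ℝ) * (v.choose m : ℝ)
            * bern (m + d) ((j : ℤ) - 1) t) := by
    rw [← Finset.sum_sub_distrib]
    apply Finset.sum_congr rfl
    intro d _
    rw [← Finset.sum_sub_distrib]
    apply Finset.sum_congr rfl
    intro m hm
    rw [inner d m hm]
    have hmv : m ≤ v := by simp only [mem_range] at hm; omega
    have hsgn : (-1 : ℝ) ^ (v + d) * (-1 : ℝ) ^ (v - m) = (-1 : ℝ) ^ (d + m) := by
      rw [← pow_add, show v + d + (v - m) = (d + m) + 2 * (v - m) from by omega,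
        pow_add, pow_mul]
      norm_num
    calc (-1:ℝ) ^ (v + d) * (n.choose d : ℝ) *
          ((-1:ℝ) ^ (v - m) * (v.choose m : ℝ) *
            (bern (m + d) (j : ℤ) t - bern (m + d) ((j : ℤ) - 1) t))
        = ((-1:ℝ) ^ (v + d) * (-1:ℝ) ^ (v - m)) * ((n.choose d : ℝ) * (v.choose m : ℝ) *
            (bern (m + d) (j : ℤ) t - bern (m + d) ((j : ℤ) - 1) t)) := by ring
      _ = _ := by rw [hsgn]; ring
  rw [step, doubleS, doubleS]
  rcases Nat.eq_zero_or_pos j with rfl | hj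
  · rw [if_pos (by norm_num; positivity), if_neg (by norm_num)]
    norm_num
  rcases lt_or_ge (n + v + 1) j with hbig | hle
  · rw [if_neg (by push_cast; omega), if_neg (by push_cast; omega),
      Nat.choose_eq_zero_of_lt (show n + v + 1 < j from hbig)]
    simp
  rcases Nat.lt_or_ge j (n + v + 1) with hmid | hend
  · -- 1 ≤ j ≤ n + v
    obtain ⟨i, rfl⟩ : ∃ i, j = i + 1 := ⟨j - 1, by omega⟩
    rw [if_pos (by push_cast; omega), if_pos (by push_cast; omega)]
    rw [show ((i + 1 : ℕ) : ℤ).toNat = i + 1 from by omega,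
      show (((i + 1 : ℕ) : ℤ) - 1).toNat = i from by omega]
    rw [Nat.choose_succ_succ' (n + v) i]
    push_cast
    ring
  · -- j = n + v + 1
    have hj' : j = n + v + 1 := by omega
    subst hj'
    rw [if_neg (by push_cast; omega), if_pos (by push_cast; omega)]
    rw [show (((n + v + 1 : ℕ) : ℤ) - 1).toNat = n + v from by omega,
      Nat.choose_self, Nat.choose_self, pow_succ]
    push_cast
    ring

lemma regroup (N V P : ℕ) (a b : ℕ → ℝ) (f : ℕ → ℕ → ℕ → ℝ) :
    ∑ d ∈ range N, a d * ∑ m ∈ range V, b m * ∑ j ∈ range P, f d m j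
      = ∑ j ∈ range P, ∑ d ∈ range N, ∑ m ∈ range V, a d * (b m * f d m j) := by
  calc ∑ d ∈ range N, a d * ∑ m ∈ range V, b m * ∑ j ∈ range P, f d m j
      = ∑ d ∈ range N, ∑ m ∈ range V, ∑ j ∈ range P, a d * (b m * f d m j) := by
        refine Finset.sum_congr rfl fun d _ => ?_
        rw [Finset.mul_sum]
        refine Finset.sum_congr rfl fun m _ => ?_
        rw [Finset.mul_sum, Finset.mul_sum]
    _ = ∑ d ∈ range N, ∑ j ∈ range P, ∑ m ∈ range V, a d * (b m * f d m j) :=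
        Finset.sum_congr rfl fun d _ => Finset.sum_comm
    _ = ∑ j ∈ range P, ∑ d ∈ range N, ∑ m ∈ range V, a d * (b m * f d m j) :=
        Finset.sum_comm

/-- Here `(n+v)_v = (n+v)!/n!` is the falling factorial. -/
theorem stmt16 (n p v : ℕ) (ω : ℝ) (h1 : (p : ℝ) ≤ ω) (h2 : ω ≤ (p : ℝ) + 1) :
    Nspline (n + v) p ω =
      (1 / ((n ! : ℝ) * (((n + v)! : ℝ) / (n ! : ℝ)))) *
        ∑ d ∈ Finset.range (n + 1), (-1 : ℝ) ^ (v + d) * (n.choose d : ℝ) *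
          ∑ m ∈ Finset.range (v + 1), (-1 : ℝ) ^ (v - m) * (v.choose m : ℝ) *
            ∑ j ∈ Finset.range (p + 1), ∑ c ∈ Finset.range (m + 1),
              bern m (c : ℤ) (ω - j) *
                (bern d ((j : ℤ) - c) (ω - j) - bern d ((j : ℤ) - c - 1) (ω - j)) := by
  unfold Nspline
  have hc : (n ! : ℝ) * (((n + v)! : ℝ) / (n ! : ℝ)) = ((n + v)! : ℝ) := by
    field_simp
  rw [hc]
  congr 1
  have hR : ∑ d ∈ Finset.range (n + 1), (-1 : ℝ) ^ (v + d) * (n.choose d : ℝ) *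
          ∑ m ∈ Finset.range (v + 1), (-1 : ℝ) ^ (v - m) * (v.choose m : ℝ) *
            ∑ j ∈ Finset.range (p + 1), ∑ c ∈ Finset.range (m + 1),
              bern m (c : ℤ) (ω - j) *
                (bern d ((j : ℤ) - c) (ω - j) - bern d ((j : ℤ) - c - 1) (ω - j))
      = ∑ j ∈ Finset.range (p + 1), ∑ d ∈ Finset.range (n + 1),
          ∑ m ∈ Finset.range (v + 1),
            ((-1 : ℝ) ^ (v + d) * (n.choose d : ℝ)) *
              (((-1 : ℝ) ^ (v - m) * (v.choose m : ℝ)) *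
                ∑ c ∈ Finset.range (m + 1),
                  bern m (c : ℤ) (ω - j) *
                    (bern d ((j : ℤ) - c) (ω - j) - bern d ((j : ℤ) - c - 1) (ω - j))) :=
    regroup (n + 1) (v + 1) (p + 1)
      (fun d => (-1 : ℝ) ^ (v + d) * (n.choose d : ℝ))
      (fun m => (-1 : ℝ) ^ (v - m) * (v.choose m : ℝ))
      (fun d m j => ∑ c ∈ Finset.range (m + 1),
        bern m (c : ℤ) (ω - j) *
          (bern d ((j : ℤ) - c) (ω - j) - bern d ((j : ℤ) - c - 1) (ω - j)))
  rw [hR]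
  refine Finset.sum_congr rfl fun j _ => ?_
  exact (perj n v j (ω - j)).symm
end

section
/- Let p be a nonnegative integer and let ω, y be real numbers with p ≤ ω ≤ p+1 and y > 0 (assuming both series converge). Then Σ_{n=0}^{∞} n! · N_{0,n}(ω;p)/(y+1)^{n+1} = Σ_{n=0}^{∞} (−1)^n · Σ_{j=0}^{p} ( B_j^n(ω−j) − B_{j−1}^n(ω−j) )/y^{n+1}. -/
open Finset Nat

section Helpers
open Filter

lemma bern_eq (n j : ℕ) (h : j ≤ n) (t : ℝ) :
    bern n (j : ℤ) t = (n.choose j : ℝ) * t ^ j * (1 - t) ^ (n - j) := by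
  unfold bern
  rw [if_pos ⟨Int.natCast_nonneg j, by exact_mod_cast h⟩]
  simp

lemma bern_eq_zero_of_lt (n j : ℕ) (h : n < j) (t : ℝ) : bern n (j : ℤ) t = 0 := by
  unfold bern
  rw [if_neg]
  rintro ⟨-, h2⟩
  have : j ≤ n := by exact_mod_cast h2
  omega

lemma bern_neg_one (n : ℕ) (t : ℝ) : bern n (((0:ℕ) : ℤ) - 1) t = 0 := by
  unfold bern
  rw [if_neg]
  rintro ⟨h1, -⟩
  omega

lemma hasSum_bern_aux {y : ℝ} (hy : 0 < y) {u : ℝ} (h : |1 - u| < y) (j : ℕ) :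
    HasSum (fun n : ℕ => (-1 : ℝ) ^ n * bern n (j : ℤ) u / y ^ (n + 1))
      ((-1 : ℝ) ^ j * u ^ j / (y + 1 - u) ^ (j + 1)) := by
  have hyne : y ≠ 0 := ne_of_gt hy
  set r : ℝ := (u - 1) / y with hr_def
  have hrabs : ‖r‖ < 1 := by
    rw [Real.norm_eq_abs, abs_div, abs_of_pos hy, div_lt_one hy]
    rwa [abs_sub_comm]
  have hr1 : (0:ℝ) < 1 - r := by
    have : r < 1 := lt_of_abs_lt (by rwa [Real.norm_eq_abs] at hrabs)
    linarith
  have hD : y + 1 - u = y * (1 - r) := by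
    rw [hr_def, mul_sub, mul_one, mul_div_cancel₀ _ hyne]
    ring
  have base := hasSum_choose_mul_geometric_of_norm_lt_one (𝕜 := ℝ) j hrabs
  have key := base.mul_left ((-1 : ℝ) ^ j * u ^ j / y ^ (j + 1))
  have hfun : (fun n : ℕ => ((-1 : ℝ) ^ j * u ^ j / y ^ (j + 1)) *
        (((n + j).choose j : ℝ) * r ^ n))
      = fun n : ℕ => (-1 : ℝ) ^ (n + j) * bern (n + j) (j : ℤ) u / y ^ (n + j + 1) := by
    funext n
    rw [bern_eq (n + j) j (Nat.le_add_left j n) u, Nat.add_sub_cancel]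
    have h1u : (1 - u) ^ n = (-1 : ℝ) ^ n * (u - 1) ^ n := by
      rw [show (1 - u : ℝ) = (-1) * (u - 1) by ring, mul_pow]
    rw [h1u, hr_def, div_pow, pow_add ((-1:ℝ)) n j]
    have hyp : y ^ (n + j + 1) = y ^ n * y ^ (j + 1) := by ring
    rw [hyp]
    have h2 : ((-1:ℝ))^n * (-1:ℝ)^n = 1 := by
      rw [← mul_pow]; norm_num
    field_simp
    linear_combination (-((-1:ℝ) ^ j * u ^ j * (((n + j).choose j : ℕ) : ℝ) * (u - 1) ^ n *
      (y ^ n * y ^ (j + 1))) + (u ^ j * (((n + j).choose j : ℕ) : ℝ) * (u - 1) ^ n * (-1:ℝ) ^ j *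
      (y ^ n * y ^ (j + 1)) - u ^ j * (((n + j).choose j : ℕ) : ℝ) * (u - 1) ^ n)) * h2

  rw [hfun] at key
  have key2 := (hasSum_nat_add_iff (f := fun n : ℕ => (-1 : ℝ) ^ n * bern n (j : ℤ) u / y ^ (n + 1)) j).mp key
  have hz : ∑ i ∈ Finset.range j, (-1 : ℝ) ^ i * bern i (j : ℤ) u / y ^ (i + 1) = 0 := by
    apply Finset.sum_eq_zero
    intro i hi
    rw [bern_eq_zero_of_lt i j (Finset.mem_range.mp hi) u]
    ring
  rw [hz, add_zero] at key2
  convert key2 using 1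
  · rfl
  rw [hD, mul_pow]
  field_simp

lemma hasSum_choose_aux {z : ℝ} {u : ℝ} (h0 : 0 ≤ u) (h : u < z) (k : ℕ) :
    HasSum (fun n : ℕ => (n.choose k : ℝ) * u ^ n / z ^ (n + 1))
      (u ^ k / (z - u) ^ (k + 1)) := by
  have hz : 0 < z := lt_of_le_of_lt h0 h
  have hzne : z ≠ 0 := ne_of_gt hz
  set r : ℝ := u / z with hr_def
  have hrabs : ‖r‖ < 1 := by
    rw [Real.norm_eq_abs, abs_div, abs_of_pos hz, div_lt_one hz]
    rwa [abs_of_nonneg h0]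
  have hr1 : (0:ℝ) < 1 - r := by
    have : r < 1 := lt_of_abs_lt (by rwa [Real.norm_eq_abs] at hrabs)
    linarith
  have hD : z - u = z * (1 - r) := by
    rw [hr_def, mul_sub, mul_one, mul_div_cancel₀ _ hzne]
  have base := hasSum_choose_mul_geometric_of_norm_lt_one (𝕜 := ℝ) k hrabs
  have key := base.mul_left (u ^ k / z ^ (k + 1))
  have hfun : (fun n : ℕ => (u ^ k / z ^ (k + 1)) * (((n + k).choose k : ℝ) * r ^ n))
      = fun n : ℕ => ((n + k).choose k : ℝ) * u ^ (n + k) / z ^ (n + k + 1) := by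
    funext n
    rw [hr_def, div_pow, pow_add u n k, pow_add z (n + k) 1,
      pow_add z n k, pow_one]
    field_simp
    ring
  rw [hfun] at key
  have key2 := (hasSum_nat_add_iff
    (f := fun n : ℕ => (n.choose k : ℝ) * u ^ n / z ^ (n + 1)) k).mp key
  have hz0 : ∑ i ∈ Finset.range k, (i.choose k : ℝ) * u ^ i / z ^ (i + 1) = 0 := by
    apply Finset.sum_eq_zero
    intro i hi
    rw [Nat.choose_eq_zero_of_lt (Finset.mem_range.mp hi)]
    simp
  rw [hz0, add_zero] at key2
  convert key2 using 1
  · rfl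
  rw [hD, mul_pow]
  field_simp

lemma hasSum_bern_zero {y : ℝ} (j : ℕ) (hj : 1 ≤ j) :
    HasSum (fun n : ℕ => (-1 : ℝ) ^ n * bern n (j : ℤ) 0 / y ^ (n + 1)) 0 := by
  have : ∀ n : ℕ, (-1 : ℝ) ^ n * bern n (j : ℤ) 0 / y ^ (n + 1) = 0 := by
    intro n
    rcases lt_or_ge n j with hn | hn
    · rw [bern_eq_zero_of_lt n j hn]; ring
    · rw [bern_eq n j hn, zero_pow (by omega : j ≠ 0)]; ring
  simpa [this] using hasSum_zero (α := ℝ) (β := ℕ)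

lemma summable_Tj {y ω : ℝ} (hy : 0 < y) (j : ℕ) (h : |1 - (ω - j)| < y) :
    Summable (fun n : ℕ => (-1 : ℝ) ^ n *
      ((bern n (j : ℤ) (ω - j) - bern n ((j : ℤ) - 1) (ω - j)) / y ^ (n + 1))) := by
  have h0 := (hasSum_bern_aux hy h j).summable
  have h1 : Summable (fun n : ℕ => (-1 : ℝ) ^ n * bern n ((j : ℤ) - 1) (ω - j) / y ^ (n + 1)) := by
    cases j with
    | zero =>
        have : (fun n : ℕ => (-1 : ℝ) ^ n * bern n (((0:ℕ) : ℤ) - 1) (ω - (0:ℕ)) / y ^ (n + 1)) = fun _ => (0:ℝ) := by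
          funext n; rw [bern_neg_one]; ring
        rw [this]; exact summable_zero
    | succ m =>
        have hc : ((m + 1 : ℕ) : ℤ) - 1 = (m : ℤ) := by push_cast; ring
        rw [show (fun n : ℕ => (-1 : ℝ) ^ n * bern n (((m+1:ℕ) : ℤ) - 1) (ω - (m+1:ℕ)) / y ^ (n + 1))
          = fun n : ℕ => (-1 : ℝ) ^ n * bern n ((m : ℕ) : ℤ) (ω - (m+1:ℕ)) / y ^ (n + 1) by
            funext n; rw [hc]]
        exact (hasSum_bern_aux hy h m).summable
  exact ((h0.sub h1).congr (fun n => by ring))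


lemma bern_zero_left (n j : ℕ) (hj : 1 ≤ j) : bern n ((j : ℕ) : ℤ) 0 = 0 := by
  rcases lt_or_ge n j with hn | hn
  · exact bern_eq_zero_of_lt n j hn 0
  · rw [bern_eq n j hn, zero_pow (by omega : j ≠ 0)]; ring

noncomputable def Taux (ω y : ℝ) (j : ℕ) (n : ℕ) : ℝ :=
  (-1 : ℝ) ^ n * ((bern n (j : ℤ) (ω - j) - bern n ((j : ℤ) - 1) (ω - j)) / y ^ (n + 1))

noncomputable def Faux (ω y : ℝ) (j : ℕ) (n : ℕ) : ℝ :=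
  (-1 : ℝ) ^ j * (((n + 1).choose j : ℕ) : ℝ) * (ω - j) ^ n / (y + 1) ^ (n + 1)

noncomputable def Vaux (ω y : ℝ) (j : ℕ) : ℝ :=
  (-1 : ℝ) ^ j * ((ω - j) ^ j / (y + 1 - (ω - j)) ^ (j + 1)) +
    (if j = 0 then 0 else (-1 : ℝ) ^ j * ((ω - j) ^ (j - 1) / (y + 1 - (ω - j)) ^ j))

lemma hasSum_Taux {ω y : ℝ} (hy : 0 < y) (j : ℕ) (hA : |1 - (ω - j)| < y) :
    HasSum (Taux ω y j) (Vaux ω y j) := by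
  cases j with
  | zero =>
    have h0 := hasSum_bern_aux hy hA 0
    have e : Taux ω y 0 = fun n : ℕ =>
        (-1 : ℝ) ^ n * bern n ((0 : ℕ) : ℤ) (ω - ((0 : ℕ) : ℝ)) / y ^ (n + 1) := by
      funext n; simp only [Taux]; rw [bern_neg_one]; ring
    rw [e]
    convert h0 using 1
    simp [Vaux]
  | succ m =>
    have h0 := hasSum_bern_aux hy hA (m + 1)
    have h1 := hasSum_bern_aux hy hA m
    have hs := h0.sub h1
    have e : Taux ω y (m + 1) = fun n : ℕ =>
        (-1 : ℝ) ^ n * bern n (((m + 1 : ℕ)) : ℤ) (ω - ((m + 1 : ℕ) : ℝ)) / y ^ (n + 1)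
        - (-1 : ℝ) ^ n * bern n ((m : ℕ) : ℤ) (ω - ((m + 1 : ℕ) : ℝ)) / y ^ (n + 1) := by
      funext n; simp only [Taux]
      rw [show (((m + 1 : ℕ)) : ℤ) - 1 = ((m : ℕ) : ℤ) by push_cast; ring]
      ring
    rw [e]
    convert hs using 1
    · rfl
    simp only [Vaux, if_neg (Nat.succ_ne_zero m), Nat.succ_sub_one]
    ring

lemma hasSum_Faux {ω y : ℝ} (j : ℕ) (h0 : 0 ≤ ω - j) (hlt : ω - j < y + 1) :
    HasSum (Faux ω y j) (Vaux ω y j) := by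
  cases j with
  | zero =>
    have base := hasSum_choose_aux h0 hlt 0
    have e : Faux ω y 0 = fun n : ℕ =>
        ((n.choose 0 : ℕ) : ℝ) * (ω - ((0 : ℕ) : ℝ)) ^ n / (y + 1) ^ (n + 1) := by
      funext n; simp [Faux]
    rw [e]
    convert base using 1
    simp [Vaux]
  | succ m =>
    have b1 := hasSum_choose_aux h0 hlt m
    have b2 := hasSum_choose_aux h0 hlt (m + 1)
    have hs := (b1.add b2).mul_left ((-1 : ℝ) ^ (m + 1))
    have e : Faux ω y (m + 1) = fun n : ℕ => (-1 : ℝ) ^ (m + 1) *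
        (((n.choose m : ℕ) : ℝ) * (ω - ((m + 1 : ℕ) : ℝ)) ^ n / (y + 1) ^ (n + 1)
         + ((n.choose (m + 1) : ℕ) : ℝ) * (ω - ((m + 1 : ℕ) : ℝ)) ^ n / (y + 1) ^ (n + 1)) := by
      funext n; simp only [Faux]
      rw [Nat.choose_succ_succ' n m]
      push_cast
      ring
    rw [e]
    convert hs using 1
    · rfl
    simp only [Vaux, if_neg (Nat.succ_ne_zero m), Nat.succ_sub_one]
    ring

lemma keyJ {p : ℕ} {ω y : ℝ} (h1 : (p : ℝ) ≤ ω) (h2 : ω ≤ (p : ℝ) + 1) (hy : 0 < y)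
    (homega : ω - 1 < y)
    (hcase : ((p : ℝ) + 1 - ω < y) ∨ (ω = (p : ℝ) ∧ 2 ≤ p)) {j : ℕ} (hj : j ≤ p) :
    ∃ v : ℝ, HasSum (Taux ω y j) v ∧ HasSum (Faux ω y j) v := by
  have hjω : (j : ℝ) ≤ ω := le_trans (by exact_mod_cast Nat.cast_le.mpr hj) h1
  have hu0 : 0 ≤ ω - j := by linarith
  have hult : ω - j < y + 1 := by
    have : (0 : ℝ) ≤ (j : ℝ) := Nat.cast_nonneg j
    linarith
  by_cases hA : |1 - (ω - j)| < y
  · exact ⟨Vaux ω y j, hasSum_Taux hy j hA, hasSum_Faux j hu0 hult⟩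
  · have hjp : j = p := by
      by_contra hne
      have hjlt : j < p := lt_of_le_of_ne hj hne
      apply hA
      have hcast : (j : ℝ) + 1 ≤ (p : ℝ) := by exact_mod_cast hjlt
      rw [abs_of_nonpos (by linarith)]
      linarith
    subst hjp
    rcases hcase with hc | ⟨hωp, hp2⟩
    · exact absurd (by rw [abs_of_nonneg (by linarith)]; linarith) hA
    · have hx : ω - (j : ℝ) = 0 := by rw [hωp]; ring
      refine ⟨0, ?_, ?_⟩
      · have e : Taux ω y j = fun _ : ℕ => (0 : ℝ) := by
          funext n
          simp only [Taux, hx]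
          rw [bern_zero_left n j (by omega),
            show ((j : ℕ) : ℤ) - 1 = (((j - 1 : ℕ)) : ℤ) by omega,
            bern_zero_left n (j - 1) (by omega)]
          ring
        rw [e]; exact hasSum_zero
      · have e : Faux ω y j = fun _ : ℕ => (0 : ℝ) := by
          funext n
          simp only [Faux, hx]
          cases n with
          | zero =>
            rw [Nat.choose_eq_zero_of_lt (by omega : 1 < j)]
            norm_num
          | succ m =>
            rw [zero_pow (Nat.succ_ne_zero m)]
            ring
        rw [e]; exact hasSum_zero

lemma step1 {p : ℕ} {ω y : ℝ} (h1 : (p : ℝ) ≤ ω) (hy : 0 < y)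
    (hf : Summable fun n : ℕ => (n ! : ℝ) * Nspline n p ω / (y + 1) ^ (n + 1)) :
    ω - 1 < y := by
  by_contra hc
  push_neg at hc
  have hω1 : (1 : ℝ) < ω := by linarith
  have hω0 : (0 : ℝ) < ω := by linarith
  have hfac : ∀ n : ℕ, (n ! : ℝ) * Nspline n p ω
      = ∑ j ∈ Finset.range (p + 1), (-1 : ℝ) ^ j * ((n + 1).choose j : ℝ) * (ω - j) ^ n := by
    intro n
    have hne : (n ! : ℝ) ≠ 0 := Nat.cast_ne_zero.mpr n.factorial_ne_zero
    simp only [Nspline]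
    rw [← mul_assoc, mul_one_div, div_self hne, one_mul]
  have h0 : Filter.Tendsto (fun n : ℕ =>
      (∑ j ∈ Finset.range (p + 1), (-1 : ℝ) ^ j * ((n + 1).choose j : ℝ) * (ω - j) ^ n)
        / (y + 1) ^ (n + 1)) Filter.atTop (nhds 0) := by
    have ht := hf.tendsto_atTop_zero
    exact ht.congr (fun n => by rw [hfac n])
  have hz : Filter.Tendsto (fun n : ℕ =>
      (∑ j ∈ Finset.range (p + 1), (-1 : ℝ) ^ j * ((n + 1).choose j : ℝ) * (ω - j) ^ n)
        / ω ^ n) Filter.atTop (nhds 0) := by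
    apply squeeze_zero_norm (a := fun n => (y + 1) *
      ‖(∑ j ∈ Finset.range (p + 1), (-1 : ℝ) ^ j * ((n + 1).choose j : ℝ) * (ω - j) ^ n)
        / (y + 1) ^ (n + 1)‖) ?_ ?_
    · intro n
      have hων : (0 : ℝ) < ω ^ n := pow_pos hω0 n
      have hy1 : (0 : ℝ) < y + 1 := by linarith
      have hyν : (0 : ℝ) < (y + 1) ^ n := pow_pos hy1 n
      set S := ∑ j ∈ Finset.range (p + 1), (-1 : ℝ) ^ j * ((n + 1).choose j : ℝ) * (ω - j) ^ n
        with hS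
      have e1 : ‖S / ω ^ n‖ = ‖S‖ / ω ^ n := by
        rw [norm_div, Real.norm_eq_abs (ω ^ n), abs_of_pos hων]
      have e2 : (y + 1) * ‖S / (y + 1) ^ (n + 1)‖ = ‖S‖ / (y + 1) ^ n := by
        rw [norm_div, Real.norm_eq_abs ((y + 1) ^ (n + 1)),
          abs_of_pos (pow_pos hy1 (n + 1)), pow_succ]
        field_simp
      show ‖S / ω ^ n‖ ≤ (y + 1) * ‖S / (y + 1) ^ (n + 1)‖
      rw [e1, e2]
      apply div_le_div_of_nonneg_left (norm_nonneg _) hyν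
      exact pow_le_pow_left₀ hy1.le (by linarith) n
    · simpa using (h0.norm.const_mul (y + 1))
  have h1t : Filter.Tendsto (fun n : ℕ =>
      (∑ j ∈ Finset.range (p + 1), (-1 : ℝ) ^ j * ((n + 1).choose j : ℝ) * (ω - j) ^ n)
        / ω ^ n) Filter.atTop (nhds 1) := by
    have hterm : ∀ j ∈ Finset.range (p + 1), Filter.Tendsto
        (fun n : ℕ => (-1 : ℝ) ^ j * ((n + 1).choose j : ℝ) * ((ω - j) / ω) ^ n)
        Filter.atTop (nhds (if j = 0 then 1 else 0)) := by
      intro j hj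
      cases j with
      | zero =>
        have e : (fun n : ℕ => (-1 : ℝ) ^ 0 * ((n + 1).choose 0 : ℝ) * ((ω - (0:ℕ)) / ω) ^ n)
            = fun _ : ℕ => (1 : ℝ) := by
          funext n
          rw [Nat.choose_zero_right]
          push_cast
          rw [sub_zero, div_self (ne_of_gt hω0)]
          norm_num
        rw [e]
        simpa using tendsto_const_nhds
      | succ m =>
        rw [if_neg (Nat.succ_ne_zero m)]
        have hjp : ((m + 1 : ℕ) : ℝ) ≤ (p : ℝ) := by
          have := Finset.mem_range.mp hj
          exact_mod_cast Nat.lt_succ_iff.mp this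
        have hρ0 : 0 ≤ (ω - ((m + 1 : ℕ) : ℝ)) / ω := by
          apply div_nonneg _ hω0.le
          linarith
        have hρ1 : (ω - ((m + 1 : ℕ) : ℝ)) / ω < 1 := by
          rw [div_lt_one hω0]
          have : (0 : ℝ) < ((m + 1 : ℕ) : ℝ) := by positivity
          linarith
        have hρn : ‖(ω - ((m + 1 : ℕ) : ℝ)) / ω‖ < 1 := by
          rw [Real.norm_eq_abs, abs_of_nonneg hρ0]; exact hρ1
        have hs : Summable (fun n : ℕ =>
            ((n + (m + 1)).choose (m + 1) : ℝ) * ((ω - ((m + 1 : ℕ) : ℝ)) / ω) ^ n) :=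
          (hasSum_choose_mul_geometric_of_norm_lt_one (𝕜 := ℝ) (m + 1) hρn).summable
        have hs2 : Summable (fun n : ℕ =>
            ((n + 1).choose (m + 1) : ℝ) * ((ω - ((m + 1 : ℕ) : ℝ)) / ω) ^ n) := by
          apply hs.of_nonneg_of_le
          · intro n; positivity
          · intro n
            apply mul_le_mul_of_nonneg_right _ (pow_nonneg hρ0 n)
            exact_mod_cast Nat.choose_le_choose (m + 1) (by omega : n + 1 ≤ n + (m + 1))
        have ht0 := hs2.tendsto_atTop_zero
        have := ht0.const_mul ((-1 : ℝ) ^ (m + 1))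
        simp only [mul_zero] at this
        exact this.congr (fun n => by ring)
    have hsum := tendsto_finset_sum (Finset.range (p + 1)) hterm
    have hval : (∑ j ∈ Finset.range (p + 1), (if j = 0 then (1 : ℝ) else 0)) = 1 := by
      rw [Finset.sum_ite_eq' (Finset.range (p + 1)) 0 (fun _ => (1 : ℝ))]
      simp
    rw [hval] at hsum
    refine hsum.congr (fun n => ?_)
    rw [Finset.sum_div]
    apply Finset.sum_congr rfl
    intro j hj
    rw [div_pow, mul_div_assoc]
  exact absurd (tendsto_nhds_unique hz h1t) (by norm_num)


lemma step2 {p : ℕ} {ω y : ℝ} (h1 : (p : ℝ) ≤ ω) (h2 : ω ≤ (p : ℝ) + 1) (hy : 0 < y)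
    (homega : ω - 1 < y)
    (hg : Summable fun n : ℕ => (-1 : ℝ) ^ n *
      ∑ j ∈ Finset.range (p + 1),
        (bern n (j : ℤ) (ω - j) - bern n ((j : ℤ) - 1) (ω - j)) / y ^ (n + 1)) :
    ((p : ℝ) + 1 - ω < y) ∨ (ω = (p : ℝ) ∧ 2 ≤ p) := by
  by_cases hw : (p : ℝ) + 1 - ω < y
  · exact Or.inl hw
  push_neg at hw
  right
  have hg' : Summable (fun n : ℕ => ∑ j ∈ Finset.range (p + 1), Taux ω y j n) := by
    apply hg.congr
    intro n
    rw [Finset.mul_sum]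
    rfl
  have hTlt : ∀ j : ℕ, j < p → Summable (Taux ω y j) := by
    intro j hjp
    have hc : (j : ℝ) + 1 ≤ (p : ℝ) := by exact_mod_cast hjp
    have habs : |1 - (ω - j)| < y := by
      rw [abs_of_nonpos (by linarith)]
      linarith
    exact summable_Tj hy j habs
  have hTp : Summable (Taux ω y p) := by
    have hlt : Summable (fun n : ℕ => ∑ j ∈ Finset.range p, Taux ω y j n) :=
      summable_sum (fun j hj => hTlt j (Finset.mem_range.mp hj))
    apply (hg'.sub hlt).congr
    intro n
    rw [Finset.sum_range_succ]
    ring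
  have htend : Filter.Tendsto (Taux ω y p) Filter.atTop (nhds 0) := hTp.tendsto_atTop_zero
  have htendn : Filter.Tendsto (fun n => ‖Taux ω y p n‖) Filter.atTop (nhds 0) := by
    simpa using htend.norm
  rcases Nat.eq_zero_or_pos p with rfl | hp1
  · exfalso
    have hω1 : ω ≤ 1 - y := by
      push_cast at hw; linarith
    have hTeq : ∀ n : ℕ, ‖Taux ω y 0 n‖ = (1 - ω) ^ n / y ^ (n + 1) := by
      intro n
      have hb0 : bern n ((0 : ℕ) : ℤ) (ω - ((0 : ℕ) : ℝ)) = (1 - ω) ^ n := by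
        rw [bern_eq n 0 (Nat.zero_le n)]
        push_cast
        norm_num
      simp only [Taux]
      rw [hb0, bern_neg_one, sub_zero]
      rw [norm_mul, norm_pow, norm_neg, norm_one, one_pow, one_mul, norm_div]
      rw [Real.norm_eq_abs ((1 - ω) ^ n), Real.norm_eq_abs (y ^ (n + 1)),
        abs_of_nonneg (pow_nonneg (by linarith) n), abs_of_pos (pow_pos hy _)]
    have hge : ∀ n : ℕ, 1 / y ≤ ‖Taux ω y 0 n‖ := by
      intro n
      rw [hTeq n]
      have h1 : y ^ n ≤ (1 - ω) ^ n := pow_le_pow_left₀ hy.le (by linarith) n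
      have h2' : y ^ (n + 1) > 0 := pow_pos hy _
      rw [div_le_div_iff₀ (by positivity) h2']
      calc 1 * y ^ (n + 1) = y * y ^ n := by ring
        _ ≤ y * (1 - ω) ^ n := by
            apply mul_le_mul_of_nonneg_left h1 hy.le
        _ = (1 - ω) ^ n * y := by ring
    have := ge_of_tendsto htendn (Filter.Eventually.of_forall hge)
    have : (0 : ℝ) < 1 / y := by positivity
    linarith [ge_of_tendsto htendn (Filter.Eventually.of_forall hge)]
  · -- p ≥ 1
    have hw' : y ≤ (p : ℝ) + 1 - ω := hw
    set u : ℝ := ω - (p : ℝ) with hu_def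
    set w : ℝ := (p : ℝ) + 1 - ω with hw_def
    have hyw : y ≤ w := hw'
    have hwpos : 0 < w := lt_of_lt_of_le hy hyw
    have hu0 : 0 ≤ u := by rw [hu_def]; linarith
    have h1w : 1 - u = w := by rw [hu_def, hw_def]; ring
    have hueq0 : u = 0 := by
      by_contra hne
      have hupos : 0 < u := lt_of_le_of_ne hu0 (Ne.symm hne)
      classical
      set ch : ℕ → ℤ → ℝ := fun n d => if 0 ≤ d then ((n.choose d.toNat : ℕ) : ℝ) else 0
        with hch
      set Bf : ℤ → ℕ → ℝ := fun d n => w ^ n * (ch n d * u - ch n (d - 1) * w) with hBf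
      have pascal : ∀ (n : ℕ) (d : ℤ), ch (n + 1) d = ch n d + ch n (d - 1) := by
        intro n d
        by_cases hd : 0 ≤ d
        · by_cases hd1 : 0 ≤ d - 1
          · obtain ⟨m, rfl⟩ : ∃ m : ℕ, d = (m : ℤ) + 1 := ⟨(d - 1).toNat, by omega⟩
            have e1 : ((m : ℤ) + 1).toNat = m + 1 := by omega
            have e2 : ((m : ℤ) + 1 - 1).toNat = m := by omega
            simp only [hch, if_pos hd, if_pos hd1, e1, e2]
            rw [Nat.choose_succ_succ' n m]
            push_cast
            ring
          · have hd0 : d = 0 := by omega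
            subst hd0
            simp only [hch]
            rw [if_pos le_rfl, if_pos le_rfl, if_neg (by omega : ¬ (0:ℤ) ≤ 0 - 1)]
            norm_num
        · have hd1 : ¬ (0 ≤ d - 1) := by omega
          simp only [hch, if_neg hd, if_neg hd1]
          ring
      have recB : ∀ (d : ℤ) (n : ℕ), Bf d (n + 1) - w * Bf d n = w * Bf (d - 1) n := by
        intro d n
        simp only [hBf]
        rw [pascal n d, pascal n (d - 1)]
        ring
      have stepT : ∀ d : ℤ, Filter.Tendsto (fun n => Bf d n / y ^ n) Filter.atTop (nhds 0) →
          Filter.Tendsto (fun n => Bf (d - 1) n / y ^ n) Filter.atTop (nhds 0) := by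
        intro d hd
        have hsh : Filter.Tendsto (fun n : ℕ => Bf d (n + 1) / y ^ (n + 1))
            Filter.atTop (nhds 0) := hd.comp (Filter.tendsto_add_atTop_nat 1)
        have hcomb := ((hsh.const_mul y).sub (hd.const_mul w)).const_mul (1 / w)
        rw [mul_zero, mul_zero, sub_zero, mul_zero] at hcomb
        refine hcomb.congr (fun n => ?_)
        have hr := recB d n
        have hwne : w ≠ 0 := ne_of_gt hwpos
        have hyne : y ≠ 0 := ne_of_gt hy
        have hyn : (y : ℝ) ^ n ≠ 0 := pow_ne_zero n hyne
        show 1 / w * (y * (Bf d (n + 1) / y ^ (n + 1)) - w * (Bf d n / y ^ n))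
            = Bf (d - 1) n / y ^ n
        calc 1 / w * (y * (Bf d (n + 1) / y ^ (n + 1)) - w * (Bf d n / y ^ n))
            = 1 / w * ((Bf d (n + 1) - w * Bf d n) / y ^ n) := by
              rw [pow_succ]
              field_simp
          _ = 1 / w * (w * Bf (d - 1) n / y ^ n) := by rw [hr]
          _ = Bf (d - 1) n / y ^ n := by
              field_simp
      have hstart : Filter.Tendsto (fun n => Bf (p : ℤ) n / y ^ n) Filter.atTop (nhds 0) := by
        have hC : (0:ℝ) < w ^ p * y / u ^ (p - 1) := by positivity
        have hg2 : Filter.Tendsto (fun n => (w ^ p * y / u ^ (p - 1)) * ‖Taux ω y p n‖)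
            Filter.atTop (nhds 0) := by
          simpa using htendn.const_mul (w ^ p * y / u ^ (p - 1))
        apply squeeze_zero_norm' _ hg2
        filter_upwards [Filter.eventually_ge_atTop p] with n hn
        have hb0 : bern n ((p : ℕ) : ℤ) (ω - (p : ℝ)) =
            ((n.choose p : ℕ) : ℝ) * u ^ p * w ^ (n - p) := by
          rw [bern_eq n p hn, ← hu_def, h1w]
        have hb1 : bern n (((p : ℕ) : ℤ) - 1) (ω - (p : ℝ)) =
            ((n.choose (p - 1) : ℕ) : ℝ) * u ^ (p - 1) * w ^ (n - (p - 1)) := by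
          rw [show ((p : ℕ) : ℤ) - 1 = (((p - 1 : ℕ)) : ℤ) by omega,
            bern_eq n (p - 1) (le_trans (Nat.sub_le p 1) hn), ← hu_def, h1w]
        have hA : ‖Taux ω y p n‖ =
            u ^ (p - 1) * w ^ (n - p) *
              |((n.choose p : ℕ) : ℝ) * u - ((n.choose (p - 1) : ℕ) : ℝ) * w| / y ^ (n + 1) := by
          simp only [Taux]
          rw [hb0, hb1]
          rw [norm_mul, norm_pow, norm_neg, norm_one, one_pow, one_mul, norm_div]
          rw [Real.norm_eq_abs (y ^ (n + 1)), abs_of_pos (pow_pos hy _)]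
          congr 1
          have e : ((n.choose p : ℕ) : ℝ) * u ^ p * w ^ (n - p)
              - ((n.choose (p - 1) : ℕ) : ℝ) * u ^ (p - 1) * w ^ (n - (p - 1))
              = u ^ (p - 1) * w ^ (n - p) *
                (((n.choose p : ℕ) : ℝ) * u - ((n.choose (p - 1) : ℕ) : ℝ) * w) := by
            rw [show n - (p - 1) = (n - p) + 1 by omega, pow_succ,
              show u ^ p = u ^ (p - 1) * u by rw [← pow_succ]; congr 1; omega]
            ring
          rw [e, Real.norm_eq_abs, abs_mul, abs_mul,
            abs_of_nonneg (pow_nonneg hu0 _), abs_of_nonneg (pow_nonneg hwpos.le _)]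
        have hchp : ch n (p : ℤ) = ((n.choose p : ℕ) : ℝ) := by
          simp only [hch, if_pos (Int.natCast_nonneg p), Int.toNat_natCast]
        have hchp1 : ch n ((p : ℤ) - 1) = ((n.choose (p - 1) : ℕ) : ℝ) := by
          simp only [hch]
          rw [if_pos (by omega : (0:ℤ) ≤ (p:ℤ) - 1),
            show ((p : ℤ) - 1).toNat = p - 1 by omega]
        have hB : ‖Bf (p : ℤ) n / y ^ n‖ =
            w ^ n * |((n.choose p : ℕ) : ℝ) * u - ((n.choose (p - 1) : ℕ) : ℝ) * w| / y ^ n := by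
          simp only [hBf]
          rw [hchp, hchp1, norm_div, Real.norm_eq_abs (y ^ n), abs_of_pos (pow_pos hy _),
            Real.norm_eq_abs, abs_mul, abs_of_nonneg (pow_nonneg hwpos.le n)]
        rw [hB, hA]
        apply le_of_eq
        rw [show w ^ n = w ^ p * w ^ (n - p) by rw [← pow_add]; congr 1; omega,
          show y ^ (n + 1) = y ^ n * y by ring]
        have hune : u ^ (p - 1) ≠ 0 := pow_ne_zero _ (ne_of_gt hupos)
        have hyne : y ≠ 0 := ne_of_gt hy
        have hynne : (y:ℝ) ^ n ≠ 0 := pow_ne_zero _ hyne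
        field_simp
      have chain : ∀ k : ℕ, Filter.Tendsto (fun n => Bf ((p : ℤ) - k) n / y ^ n)
          Filter.atTop (nhds 0) := by
        intro k
        induction k with
        | zero => simpa using hstart
        | succ k ih =>
          have hs := stepT _ ih
          have e : ((p : ℤ) - k) - 1 = (p : ℤ) - ((k + 1 : ℕ) : ℤ) := by push_cast; ring
          rwa [e] at hs
      have hfin : Filter.Tendsto (fun n => w ^ n * u / y ^ n) Filter.atTop (nhds 0) := by
        have hp := chain p
        rw [show ((p : ℤ) - (p : ℕ)) = 0 by omega] at hp
        refine hp.congr (fun n => ?_)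
        simp only [hBf, hch]
        rw [if_pos le_rfl, if_neg (by omega : ¬ (0:ℤ) ≤ 0 - 1)]
        norm_num
      have hge : ∀ n : ℕ, u ≤ w ^ n * u / y ^ n := by
        intro n
        have hyn : (0:ℝ) < y ^ n := pow_pos hy n
        rw [le_div_iff₀ hyn]
        calc u * y ^ n ≤ u * w ^ n := by
              apply mul_le_mul_of_nonneg_left (pow_le_pow_left₀ hy.le hyw n) hu0
          _ = w ^ n * u := by ring
      have hle := ge_of_tendsto hfin (Filter.Eventually.of_forall hge)
      linarith
    have hp2 : 2 ≤ p := by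
      by_contra hplt
      have hpe : p = 1 := by omega
      subst hpe
      have hω : ω = 1 := by
        rw [hu_def] at hueq0
        push_cast at hueq0
        linarith
      have hTeq : ∀ n : ℕ, ‖Taux ω y 1 n‖ = 1 / y ^ (n + 1) := by
        intro n
        have hx : ω - ((1:ℕ) : ℝ) = 0 := by push_cast; linarith
        have hb1 : bern n ((1 : ℕ) : ℤ) (ω - ((1:ℕ):ℝ)) = 0 := by
          rw [hx]; exact bern_zero_left n 1 le_rfl
        have hb0 : bern n (((1 : ℕ) : ℤ) - 1) (ω - ((1:ℕ):ℝ)) = 1 := by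
          rw [show ((1:ℕ):ℤ) - 1 = ((0:ℕ):ℤ) by norm_num, hx, bern_eq n 0 (Nat.zero_le n)]
          norm_num
        simp only [Taux]
        rw [hb1, hb0]
        rw [norm_mul, norm_pow, norm_neg, norm_one, one_pow, one_mul, norm_div]
        rw [Real.norm_eq_abs (y ^ (n+1)), abs_of_pos (pow_pos hy _)]
        norm_num
      have hy1 : y ≤ 1 := by
        have hcw := hyw
        rw [hw_def] at hcw
        push_cast at hcw
        linarith
      have hge : ∀ n : ℕ, 1 / y ≤ ‖Taux ω y 1 n‖ := by
        intro n
        rw [hTeq n]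
        have h1' : y ^ (n + 1) ≤ y := by
          calc y ^ (n+1) ≤ y ^ 1 := pow_le_pow_of_le_one hy.le hy1 (by omega)
            _ = y := pow_one y
        exact one_div_le_one_div_of_le (pow_pos hy (n+1)) h1'
      have hle := ge_of_tendsto htendn (Filter.Eventually.of_forall hge)
      have hpos : (0:ℝ) < 1 / y := by positivity
      linarith
    constructor
    · rw [hu_def] at hueq0; linarith
    · exact hp2


end Helpers

theorem stmt19 (p : ℕ) (ω y : ℝ) (h1 : (p : ℝ) ≤ ω) (h2 : ω ≤ (p : ℝ) + 1) (hy : 0 < y)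
    (hf : Summable fun n : ℕ => (n ! : ℝ) * Nspline n p ω / (y + 1) ^ (n + 1))
    (hg : Summable fun n : ℕ => (-1 : ℝ) ^ n *
      ∑ j ∈ Finset.range (p + 1),
        (bern n (j : ℤ) (ω - j) - bern n ((j : ℤ) - 1) (ω - j)) / y ^ (n + 1)) :
    ∑' n : ℕ, (n ! : ℝ) * Nspline n p ω / (y + 1) ^ (n + 1) =
      ∑' n : ℕ, (-1 : ℝ) ^ n *
        ∑ j ∈ Finset.range (p + 1),
          (bern n (j : ℤ) (ω - j) - bern n ((j : ℤ) - 1) (ω - j)) / y ^ (n + 1) := by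
  have homega : ω - 1 < y := step1 h1 hy hf
  have hcase := step2 h1 h2 hy homega hg
  have key : ∀ j ∈ Finset.range (p + 1), HasSum (Taux ω y j) (∑' n, Taux ω y j n)
      ∧ HasSum (Faux ω y j) (∑' n, Taux ω y j n) := by
    intro j hj
    obtain ⟨v, hT, hF⟩ := keyJ h1 h2 hy homega hcase
      (Nat.lt_succ_iff.mp (Finset.mem_range.mp hj))
    rw [hT.tsum_eq]
    exact ⟨hT, hF⟩
  have hL := hasSum_sum (f := fun j => Faux ω y j) (s := Finset.range (p + 1))
    (fun j hj => (key j hj).2)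
  have hR := hasSum_sum (f := fun j => Taux ω y j) (s := Finset.range (p + 1))
    (fun j hj => (key j hj).1)
  have lhs_eq : (fun n : ℕ => (n ! : ℝ) * Nspline n p ω / (y + 1) ^ (n + 1))
      = fun n : ℕ => ∑ j ∈ Finset.range (p + 1), Faux ω y j n := by
    funext n
    have hne : (n ! : ℝ) ≠ 0 := Nat.cast_ne_zero.mpr n.factorial_ne_zero
    simp only [Nspline, Faux]
    rw [← mul_assoc, mul_one_div, div_self hne, one_mul, Finset.sum_div]
  have rhs_eq : (fun n : ℕ => (-1 : ℝ) ^ n *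
      ∑ j ∈ Finset.range (p + 1),
        (bern n (j : ℤ) (ω - j) - bern n ((j : ℤ) - 1) (ω - j)) / y ^ (n + 1))
      = fun n : ℕ => ∑ j ∈ Finset.range (p + 1), Taux ω y j n := by
    funext n
    rw [Finset.mul_sum]
    rfl
  rw [show (∑' n : ℕ, (n ! : ℝ) * Nspline n p ω / (y + 1) ^ (n + 1))
      = ∑' n : ℕ, ∑ j ∈ Finset.range (p + 1), Faux ω y j n from by rw [← lhs_eq],
    show (∑' n : ℕ, (-1 : ℝ) ^ n * ∑ j ∈ Finset.range (p + 1),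
        (bern n (j : ℤ) (ω - j) - bern n ((j : ℤ) - 1) (ω - j)) / y ^ (n + 1))
      = ∑' n : ℕ, ∑ j ∈ Finset.range (p + 1), Taux ω y j n from by rw [← rhs_eq],
    hL.tsum_eq, hR.tsum_eq]
end
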